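/- In the just- or over-identified setup (q ≥ k), if λ* := inf{λ ≥ 0 : T(α̂_K(λ)) ≤ Q} is finite, where T(α) = n·l_IV(α)/l_OLS(α), α̂_K(λ) = argmin_α {l_OLS(α) + λ·l_IV(α)}, and Q > 0, then T(α̂_TSLS) ≤ Q, where α̂_TSLS = (Z^T P_A Z)^{-1} Z^T P_A Y = lim_{λ→∞} α̂_K(λ). Conversely, in the strictly monotone case, T(α̂_TSLS) < Q implies λ* < ∞. -/

import Mathlib

open Matrix

set_option maxHeartbeats 1000000

lemma aux_dot_swap {n m : ℕ} (M : Matrix (Fin n) (Fin m) ℝ) (u : Fin n → ℝ) (v : Fin m → ℝ) :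
    u ⬝ᵥ M *ᵥ v = v ⬝ᵥ Mᵀ *ᵥ u := by
  rw [dotProduct_mulVec, mulVec_transpose, dotProduct_comm]

lemma aux_dot_self_pos {n : ℕ} {v : Fin n → ℝ} (hv : v ≠ 0) : 0 < v ⬝ᵥ v := by
  have nn : 0 ≤ v ⬝ᵥ v := Finset.sum_nonneg fun i _ => mul_self_nonneg _
  rcases nn.lt_or_eq with h | h
  · exact h
  · exact absurd (dotProduct_self_eq_zero.mp h.symm) hv

lemma aux_rank_inj {q k : ℕ} (W : Matrix (Fin q) (Fin k) ℝ) (hW : W.rank = k)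
    {x : Fin k → ℝ} (hx : x ≠ 0) : W *ᵥ x ≠ 0 := by
  have h := LinearMap.finrank_range_add_finrank_ker W.mulVecLin
  rw [Module.finrank_pi ℝ] at h
  simp only [Fintype.card_fin] at h
  have hker : Module.finrank ℝ (LinearMap.ker W.mulVecLin) = 0 := by
    have : W.rank = Module.finrank ℝ (LinearMap.range W.mulVecLin) := rfl
    omega
  have hbot : LinearMap.ker W.mulVecLin = ⊥ := Submodule.finrank_eq_zero.mp hker
  have hinj : Function.Injective W.mulVecLin := LinearMap.ker_eq_bot.mp hbot
  intro h0
  exact hx (hinj (by simpa [Matrix.mulVecLin_apply] using h0))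

lemma aux_quad {n k : ℕ} (Z : Matrix (Fin n) (Fin k) ℝ) (Y : Fin n → ℝ)
    (N : Matrix (Fin n) (Fin n) ℝ) (hN : Nᵀ = N) (a β : Fin k → ℝ)
    (ha : (Zᵀ * N * Z) *ᵥ a = (Zᵀ * N) *ᵥ Y) :
    (Y - Z *ᵥ β) ⬝ᵥ N *ᵥ (Y - Z *ᵥ β)
      = (Y - Z *ᵥ a) ⬝ᵥ N *ᵥ (Y - Z *ᵥ a)
        + (Z *ᵥ (β - a)) ⬝ᵥ N *ᵥ (Z *ᵥ (β - a)) := by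
  set r : Fin n → ℝ := Y - Z *ᵥ a with hr
  set d : Fin n → ℝ := Z *ᵥ (β - a) with hd
  have h2 : (Zᵀ * N) *ᵥ r = 0 := by
    rw [hr, mulVec_sub, mulVec_mulVec, ha, sub_self]
  have hrd0 : d ⬝ᵥ N *ᵥ r = 0 := by
    have h1 : d ⬝ᵥ N *ᵥ r = (β - a) ⬝ᵥ (Zᵀ * N) *ᵥ r := by
      rw [hd, dotProduct_comm, dotProduct_mulVec, ← mulVec_transpose, mulVec_mulVec,
        dotProduct_comm, dotProduct_mulVec]
    rw [h1, h2, dotProduct_zero]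
  have hrd0' : r ⬝ᵥ N *ᵥ d = 0 := by
    rw [aux_dot_swap, hN]; exact hrd0
  have hβ : Y - Z *ᵥ β = r - d := by
    rw [hr, hd, mulVec_sub]; abel
  rw [hβ]
  have hexp : (r - d) ⬝ᵥ N *ᵥ (r - d)
      = r ⬝ᵥ N *ᵥ r - r ⬝ᵥ N *ᵥ d - (d ⬝ᵥ N *ᵥ r - d ⬝ᵥ N *ᵥ d) := by
    rw [mulVec_sub, sub_dotProduct, dotProduct_sub, dotProduct_sub]
  rw [hexp, hrd0, hrd0']; ring

lemma aux_AA_posDef {n q : ℕ} (A : Matrix (Fin n) (Fin q) ℝ) (hAA : IsUnit (Aᵀ * A)) :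
    (Aᵀ * A).PosDef := by
  refine Matrix.PosDef.of_dotProduct_mulVec_pos ?_ (fun x hx => ?_)
  · rw [IsHermitian, conjTranspose_eq_transpose_of_trivial, transpose_mul, transpose_transpose]
  · have hq : x ⬝ᵥ (Aᵀ * A) *ᵥ x = (A *ᵥ x) ⬝ᵥ (A *ᵥ x) := by
      rw [← mulVec_mulVec, aux_dot_swap, transpose_transpose]
    have hAx : A *ᵥ x ≠ 0 := by
      intro h0
      have : (Aᵀ * A) *ᵥ x = 0 := by rw [← mulVec_mulVec, h0, mulVec_zero]
      have hinj := Matrix.mulVec_injective_iff_isUnit.mpr hAA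
      exact hx (hinj (by simpa using this))
    simpa [hq] using aux_dot_self_pos hAx

section PAfacts
variable {n q : ℕ} (A : Matrix (Fin n) (Fin q) ℝ)

lemma aux_S_sym (hAA : IsUnit (Aᵀ * A)) : ((Aᵀ * A)⁻¹)ᵀ = (Aᵀ * A)⁻¹ := by
  rw [transpose_nonsing_inv, transpose_mul, transpose_transpose]

lemma aux_PA_sym (hAA : IsUnit (Aᵀ * A)) :
    (A * (Aᵀ * A)⁻¹ * Aᵀ)ᵀ = A * (Aᵀ * A)⁻¹ * Aᵀ := by
  rw [transpose_mul, transpose_mul, transpose_transpose, aux_S_sym A hAA, Matrix.mul_assoc]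

lemma aux_PA_idem (hAA : IsUnit (Aᵀ * A)) :
    (A * (Aᵀ * A)⁻¹ * Aᵀ) * (A * (Aᵀ * A)⁻¹ * Aᵀ) = A * (Aᵀ * A)⁻¹ * Aᵀ := by
  have hdet : IsUnit (Aᵀ * A).det := (Matrix.isUnit_iff_isUnit_det _).mp hAA
  have h1 : (Aᵀ * A)⁻¹ * (Aᵀ * A) = 1 := Matrix.nonsing_inv_mul _ hdet
  calc (A * (Aᵀ * A)⁻¹ * Aᵀ) * (A * (Aᵀ * A)⁻¹ * Aᵀ)
      = A * (((Aᵀ * A)⁻¹ * (Aᵀ * A)) * ((Aᵀ * A)⁻¹ * Aᵀ)) := by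
        simp only [Matrix.mul_assoc]
    _ = A * (Aᵀ * A)⁻¹ * Aᵀ := by rw [h1, Matrix.one_mul, Matrix.mul_assoc]

lemma aux_PA_psd (hAA : IsUnit (Aᵀ * A)) : (A * (Aᵀ * A)⁻¹ * Aᵀ).PosSemidef := by
  have hS : ((Aᵀ * A)⁻¹).PosSemidef := (aux_AA_posDef A hAA).inv.posSemidef
  have := hS.mul_mul_conjTranspose_same A
  rwa [conjTranspose_eq_transpose_of_trivial] at this

lemma aux_PA_nn (hAA : IsUnit (Aᵀ * A)) (v : Fin n → ℝ) :
    0 ≤ v ⬝ᵥ (A * (Aᵀ * A)⁻¹ * Aᵀ) *ᵥ v := by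
  simpa using (aux_PA_psd A hAA).dotProduct_mulVec_nonneg v

end PAfacts

lemma aux_B_posDef {n q k : ℕ} (Z : Matrix (Fin n) (Fin k) ℝ) (A : Matrix (Fin n) (Fin q) ℝ)
    (hAA : IsUnit (Aᵀ * A)) (hAZ : (Aᵀ * Z).rank = k) :
    (Zᵀ * (A * (Aᵀ * A)⁻¹ * Aᵀ) * Z).PosDef := by
  set S : Matrix (Fin q) (Fin q) ℝ := (Aᵀ * A)⁻¹ with hS_def
  have hS : S.PosDef := (aux_AA_posDef A hAA).inv
  refine Matrix.PosDef.of_dotProduct_mulVec_pos ?_ (fun x hx => ?_)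
  · have := ((aux_PA_psd A hAA).conjTranspose_mul_mul_same Z).1
    rwa [conjTranspose_eq_transpose_of_trivial] at this
  · have hw : (Aᵀ * Z) *ᵥ x ≠ 0 := aux_rank_inj _ hAZ hx
    have key : x ⬝ᵥ (Zᵀ * (A * S * Aᵀ) * Z) *ᵥ x
        = ((Aᵀ * Z) *ᵥ x) ⬝ᵥ S *ᵥ ((Aᵀ * Z) *ᵥ x) := by
      have e1 : (Zᵀ * (A * S * Aᵀ) * Z) *ᵥ x = Zᵀ *ᵥ ((A * S * Aᵀ) *ᵥ (Z *ᵥ x)) := by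
        rw [mulVec_mulVec, mulVec_mulVec]
      rw [e1, aux_dot_swap, transpose_transpose]
      have e2 : (A * S * Aᵀ) *ᵥ (Z *ᵥ x) = A *ᵥ (S *ᵥ ((Aᵀ * Z) *ᵥ x)) := by
        simp [mulVec_mulVec, Matrix.mul_assoc]
      rw [e2, dotProduct_comm, aux_dot_swap, mulVec_mulVec, dotProduct_comm, mulVec_mulVec]
    have := hS.dotProduct_mulVec_pos hw
    simp only [star_trivial] at this
    simpa [key] using this



/-- Feasibility of the dual PULSE parameter in the just- or over-identified
setup (`k ≤ q`): if `λ* = inf{λ ≥ 0 : T(α̂_K(λ)) ≤ Q}` is finite (i.e. the set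
is nonempty), then `T(α̂_TSLS) ≤ Q`; conversely, in the strictly monotone case,
`T(α̂_TSLS) < Q` implies `λ* < ∞`. -/
theorem dual_pulse_feasibility {n k q : ℕ} (hkq : k ≤ q)
    (Z : Matrix (Fin n) (Fin k) ℝ) (A : Matrix (Fin n) (Fin q) ℝ) (Y : Fin n → ℝ)
    (hAA : IsUnit (Aᵀ * A)) (hAZ : (Aᵀ * Z).rank = k)
    (hZ : (Zᵀ * Z).PosDef)
    (hY : ∀ α : Fin k → ℝ, Y ≠ Z.mulVec α) (Q : ℝ) (hQ : 0 < Q) :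
    let PA : Matrix (Fin n) (Fin n) ℝ := A * (Aᵀ * A)⁻¹ * Aᵀ
    let lOLS : (Fin k → ℝ) → ℝ := fun α => (Y - Z.mulVec α) ⬝ᵥ (Y - Z.mulVec α)
    let lIV : (Fin k → ℝ) → ℝ := fun α =>
      (PA.mulVec (Y - Z.mulVec α)) ⬝ᵥ (PA.mulVec (Y - Z.mulVec α))
    let T : (Fin k → ℝ) → ℝ := fun α => (n : ℝ) * lIV α / lOLS α
    let αK : ℝ → (Fin k → ℝ) := fun lam =>
      ((Zᵀ * (1 + lam • PA) * Z)⁻¹).mulVec ((Zᵀ * (1 + lam • PA)).mulVec Y)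
    let αTSLS : Fin k → ℝ := ((Zᵀ * PA * Z)⁻¹).mulVec ((Zᵀ * PA).mulVec Y)
    ({lam : ℝ | 0 ≤ lam ∧ T (αK lam) ≤ Q}.Nonempty → T αTSLS ≤ Q) ∧
      (StrictAntiOn (fun lam => T (αK lam)) (Set.Ici 0) →
        T αTSLS < Q → {lam : ℝ | 0 ≤ lam ∧ T (αK lam) ≤ Q}.Nonempty) := by
  intro PA lOLS lIV T αK αTSLS
  have hPAsym : PAᵀ = PA := aux_PA_sym A hAA
  have hPAidem : PA * PA = PA := aux_PA_idem A hAA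
  have hPAnn : ∀ v, 0 ≤ v ⬝ᵥ PA *ᵥ v := aux_PA_nn A hAA
  have hB : (Zᵀ * PA * Z).PosDef := aux_B_posDef Z A hAA hAZ
  -- lIV in quadratic-form shape
  have hlIV : ∀ α, lIV α = (Y - Z *ᵥ α) ⬝ᵥ PA *ᵥ (Y - Z *ᵥ α) := by
    intro α
    show (PA *ᵥ (Y - Z *ᵥ α)) ⬝ᵥ (PA *ᵥ (Y - Z *ᵥ α)) = _
    rw [aux_dot_swap, hPAsym, mulVec_mulVec, hPAidem]
  have hlIV_nn : ∀ α, 0 ≤ lIV α := fun α =>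
    Finset.sum_nonneg fun i _ => mul_self_nonneg _
  have hlOLS_pos : ∀ α, 0 < lOLS α := fun α =>
    aux_dot_self_pos (sub_ne_zero_of_ne (hY α))
  -- symmetry and expansion facts for N = 1 + lam • PA
  have hNsym : ∀ lam : ℝ, (1 + lam • PA)ᵀ = 1 + lam • PA := fun lam => by
    rw [transpose_add, transpose_one, transpose_smul, hPAsym]
  have hZNZ : ∀ lam : ℝ, Zᵀ * (1 + lam • PA) * Z = Zᵀ * Z + lam • (Zᵀ * PA * Z) := by
    intro lam
    rw [Matrix.mul_add, Matrix.mul_one, Matrix.add_mul, Matrix.mul_smul, Matrix.smul_mul]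
  have hM_pd : ∀ lam : ℝ, 0 ≤ lam → (Zᵀ * Z + lam • (Zᵀ * PA * Z)).PosDef := by
    intro lam hlam
    refine Matrix.PosDef.of_dotProduct_mulVec_pos ?_ (fun x hx => ?_)
    · show (Zᵀ * Z + lam • (Zᵀ * PA * Z))ᴴ = _
      rw [conjTranspose_add, conjTranspose_smul, star_trivial, hZ.1.eq, hB.1.eq]
    · have e : x ⬝ᵥ (Zᵀ * Z + lam • (Zᵀ * PA * Z)) *ᵥ x
          = x ⬝ᵥ (Zᵀ * Z) *ᵥ x + lam * (x ⬝ᵥ (Zᵀ * PA * Z) *ᵥ x) := by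
        rw [add_mulVec, smul_mulVec, dotProduct_add, dotProduct_smul, smul_eq_mul]
      have h1 : 0 < x ⬝ᵥ (Zᵀ * Z) *ᵥ x := by simpa using hZ.dotProduct_mulVec_pos hx
      have h2 : 0 ≤ x ⬝ᵥ (Zᵀ * PA * Z) *ᵥ x := by simpa using hB.posSemidef.dotProduct_mulVec_nonneg x
      simp only [star_trivial, e]
      exact add_pos_of_pos_of_nonneg h1 (mul_nonneg hlam h2)
  have hNnn : ∀ lam : ℝ, 0 ≤ lam → ∀ v, 0 ≤ v ⬝ᵥ (1 + lam • PA) *ᵥ v := by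
    intro lam hlam v
    have e : v ⬝ᵥ (1 + lam • PA) *ᵥ v = v ⬝ᵥ v + lam * (v ⬝ᵥ PA *ᵥ v) := by
      rw [add_mulVec, one_mulVec, smul_mulVec, dotProduct_add, dotProduct_smul,
        smul_eq_mul]
    rw [e]
    have : (0:ℝ) ≤ v ⬝ᵥ v := Finset.sum_nonneg fun i _ => mul_self_nonneg _
    have := hPAnn v
    nlinarith
  have hfval : ∀ (lam : ℝ) (β), (Y - Z *ᵥ β) ⬝ᵥ (1 + lam • PA) *ᵥ (Y - Z *ᵥ β)
      = lOLS β + lam * lIV β := by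
    intro lam β
    rw [add_mulVec, one_mulVec, smul_mulVec, dotProduct_add, dotProduct_smul,
      smul_eq_mul, hlIV β]
  -- normal equations
  have haK : ∀ lam : ℝ, 0 ≤ lam →
      (Zᵀ * (1 + lam • PA) * Z) *ᵥ (αK lam) = (Zᵀ * (1 + lam • PA)) *ᵥ Y := by
    intro lam hlam
    have hu : IsUnit (Zᵀ * (1 + lam • PA) * Z).det := by
      rw [hZNZ]; exact (hM_pd lam hlam).det_pos.ne'.isUnit
    show (Zᵀ * (1 + lam • PA) * Z) *ᵥ
        ((Zᵀ * (1 + lam • PA) * Z)⁻¹ *ᵥ ((Zᵀ * (1 + lam • PA)) *ᵥ Y)) = _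
    rw [mulVec_mulVec, Matrix.mul_nonsing_inv _ hu, one_mulVec]
  have haT : (Zᵀ * PA * Z) *ᵥ αTSLS = (Zᵀ * PA) *ᵥ Y := by
    have hu : IsUnit (Zᵀ * PA * Z).det := hB.det_pos.ne'.isUnit
    show (Zᵀ * PA * Z) *ᵥ ((Zᵀ * PA * Z)⁻¹ *ᵥ ((Zᵀ * PA) *ᵥ Y)) = _
    rw [mulVec_mulVec, Matrix.mul_nonsing_inv _ hu, one_mulVec]
  -- minimization properties
  have hmin : ∀ lam : ℝ, 0 ≤ lam → ∀ β,
      lOLS (αK lam) + lam * lIV (αK lam) ≤ lOLS β + lam * lIV β := by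
    intro lam hlam β
    have hq := aux_quad Z Y (1 + lam • PA) (hNsym lam) (αK lam) β (haK lam hlam)
    rw [hfval, hfval] at hq
    have := hNnn lam hlam (Z *ᵥ (β - αK lam))
    linarith
  have hTmin : ∀ β, lIV αTSLS ≤ lIV β := by
    intro β
    have hq := aux_quad Z Y PA hPAsym αTSLS β haT
    rw [← hlIV β, ← hlIV αTSLS] at hq
    have := hPAnn (Z *ᵥ (β - αTSLS))
    linarith
  -- T comparison
  have hT_le : ∀ lam : ℝ, 0 ≤ lam → T αTSLS ≤ T (αK lam) := by
    intro lam hlam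
    have h1 : lIV αTSLS ≤ lIV (αK lam) := hTmin _
    have h2 : lOLS (αK lam) ≤ lOLS αTSLS := by
      have h3 := hmin lam hlam αTSLS
      nlinarith
    show (n : ℝ) * lIV αTSLS / lOLS αTSLS ≤ (n : ℝ) * lIV (αK lam) / lOLS (αK lam)
    exact div_le_div₀ (mul_nonneg (Nat.cast_nonneg n) (hlIV_nn _))
      (mul_le_mul_of_nonneg_left h1 (Nat.cast_nonneg n)) (hlOLS_pos _) h2
  constructor
  · rintro ⟨lam, hlam0, hlamQ⟩
    exact le_trans (hT_le lam hlam0) hlamQ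
  · intro _ hTQ
    -- continuity argument
    set g : ℝ → (Fin k → ℝ) := fun μ =>
      (μ • (Zᵀ * Z) + Zᵀ * PA * Z)⁻¹ *ᵥ (μ • (Zᵀ *ᵥ Y) + (Zᵀ * PA) *ᵥ Y) with hg_def
    have hg0 : g 0 = αTSLS := by
      simp only [hg_def, zero_smul, zero_add]; rfl
    have hmat_cont : Continuous (fun μ : ℝ => μ • (Zᵀ * Z) + Zᵀ * PA * Z) :=
      (continuous_id.smul continuous_const).add continuous_const
    have hdet_ne : ((0:ℝ) • (Zᵀ * Z) + Zᵀ * PA * Z).det ≠ 0 := by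
      simpa using hB.det_pos.ne'
    have hinvert : ContinuousAt (Inv.inv : Matrix (Fin k) (Fin k) ℝ → _)
        ((0:ℝ) • (Zᵀ * Z) + Zᵀ * PA * Z) := by
      apply continuousAt_matrix_inv
      rw [Ring.inverse_eq_inv']
      exact continuousAt_inv₀ hdet_ne
    have hinv_cont : ContinuousAt (fun μ : ℝ => (μ • (Zᵀ * Z) + Zᵀ * PA * Z)⁻¹) 0 :=
      ContinuousAt.comp (x := (0:ℝ)) (g := Inv.inv)
        (f := fun μ : ℝ => μ • (Zᵀ * Z) + Zᵀ * PA * Z) hinvert hmat_cont.continuousAt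
    have hvec_cont : Continuous (fun μ : ℝ => μ • (Zᵀ *ᵥ Y) + (Zᵀ * PA) *ᵥ Y) :=
      (continuous_id.smul continuous_const).add continuous_const
    have hbig : Continuous (fun p : Matrix (Fin k) (Fin k) ℝ × (Fin k → ℝ) => p.1 *ᵥ p.2) :=
      continuous_fst.matrix_mulVec continuous_snd
    have hg_cont : ContinuousAt g 0 := by
      show ContinuousAt ((fun p : Matrix (Fin k) (Fin k) ℝ × (Fin k → ℝ) => p.1 *ᵥ p.2) ∘
        (fun μ : ℝ => ((μ • (Zᵀ * Z) + Zᵀ * PA * Z)⁻¹, μ • (Zᵀ *ᵥ Y) + (Zᵀ * PA) *ᵥ Y))) 0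
      exact hbig.continuousAt.comp (hinv_cont.prodMk (hvec_cont.continuousAt (x := 0)))
    have hres : Continuous (fun α : Fin k → ℝ => Y - Z *ᵥ α) :=
      continuous_const.sub (continuous_const.matrix_mulVec continuous_id)
    have hlOLSc : Continuous lOLS := hres.dotProduct hres
    have hlIVc : Continuous lIV :=
      (continuous_const.matrix_mulVec hres).dotProduct
        (continuous_const.matrix_mulVec hres)
    have hT_cont : ContinuousAt T (g 0) := by
      apply ContinuousAt.div
      · exact (continuous_const.mul hlIVc).continuousAt
      · exact hlOLSc.continuousAt
      · rw [hg0]; exact (hlOLS_pos αTSLS).ne'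
    have hcomp : ContinuousAt (fun μ => T (g μ)) 0 := hT_cont.comp hg_cont
    have hval : T (g 0) < Q := by rw [hg0]; exact hTQ
    have hev : ∀ᶠ μ in nhds (0:ℝ), T (g μ) < Q :=
      Filter.Tendsto.eventually_lt_const hval hcomp
    rcases Metric.eventually_nhds_iff.mp hev with ⟨δ, hδ, hball⟩
    have hμpos : (0:ℝ) < δ / 2 := by linarith
    have hμ : T (g (δ / 2)) < Q := by
      apply hball
      rw [Real.dist_eq, sub_zero, abs_of_pos hμpos]
      linarith
    -- identify g μ with αK μ⁻¹
    have hgαK : ∀ μ : ℝ, 0 < μ → g μ = αK μ⁻¹ := by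
      intro μ hμ0
      have hμlam : μ * μ⁻¹ = 1 := mul_inv_cancel₀ hμ0.ne'
      set M : Matrix (Fin k) (Fin k) ℝ := Zᵀ * Z + μ⁻¹ • (Zᵀ * PA * Z) with hM_def
      have hMu : IsUnit M.det := (hM_pd μ⁻¹ (by positivity)).det_pos.ne'.isUnit
      have hsmulM : μ • (Zᵀ * Z) + Zᵀ * PA * Z = μ • M := by
        rw [hM_def, smul_add, smul_smul, hμlam, one_smul]
      have hinv_smul : (μ • M)⁻¹ = μ⁻¹ • M⁻¹ := by
        apply Matrix.inv_eq_right_inv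
        rw [Matrix.smul_mul, Matrix.mul_smul, smul_smul, hμlam,
          Matrix.mul_nonsing_inv _ hMu, one_smul]
      have hsmulv : μ • (Zᵀ *ᵥ Y) + (Zᵀ * PA) *ᵥ Y
          = μ • ((Zᵀ *ᵥ Y) + μ⁻¹ • ((Zᵀ * PA) *ᵥ Y)) := by
        rw [smul_add, smul_smul, hμlam, one_smul]
      have hNv : (Zᵀ * (1 + μ⁻¹ • PA)) *ᵥ Y = Zᵀ *ᵥ Y + μ⁻¹ • ((Zᵀ * PA) *ᵥ Y) := by
        rw [Matrix.mul_add, Matrix.mul_one, Matrix.mul_smul, add_mulVec, smul_mulVec]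
      show (μ • (Zᵀ * Z) + Zᵀ * PA * Z)⁻¹ *ᵥ (μ • (Zᵀ *ᵥ Y) + (Zᵀ * PA) *ᵥ Y)
          = (Zᵀ * (1 + μ⁻¹ • PA) * Z)⁻¹ *ᵥ ((Zᵀ * (1 + μ⁻¹ • PA)) *ᵥ Y)
      rw [hsmulM, hinv_smul, hsmulv, hZNZ, hNv, ← hM_def, smul_mulVec,
        mulVec_smul, smul_smul, inv_mul_cancel₀ hμ0.ne', one_smul]
    refine ⟨(δ / 2)⁻¹, ?_, ?_⟩
    · positivity
    · rw [← hgαK (δ / 2) hμpos]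
      exact le_of_lt hμ
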